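/- Let p ≥ 3 be a prime with p ∉ {3, 5}. Then p does not divide the number of points of the reduction of E₂ modulo p, i.e. p ∤ #E₂(𝔽_p); equivalently, a_p(E₂) ≢ 1 mod p. -/

import Mathlib

/-- The reduction modulo `p` of the elliptic curve
`E₂ : y² + xy + y = x³ + x² − 5x + 2` (Cremona label 15A3), i.e. the Weierstrass
curve over `𝔽_p = ZMod p` with coefficients `a₁ = 1`, `a₂ = 1`, `a₃ = 1`, `a₄ = −5`,
`a₆ = 2`. -/
def E₂mod (p : ℕ) : WeierstrassCurve.Affine (ZMod p) :=
  { a₁ := 1, a₂ := 1, a₃ := 1, a₄ := -5, a₆ := 2 }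

instance optionFinite {α : Type*} [Finite α] : Finite (Option α) :=
  Finite.of_equiv _ (Equiv.optionEquivSumPUnit.{0} α).symm

lemma nat_card_option (α : Type*) [Finite α] : Nat.card (Option α) = Nat.card α + 1 := by
  rw [Nat.card_congr (Equiv.optionEquivSumPUnit.{0} α), Nat.card_sum,
    Nat.card_unique (α := PUnit)]

/-- In an additive commutative group, two distinct nonzero elements of order two generate
a Klein four group. -/
lemma closure_pair_card_four {G : Type*} [AddCommGroup G] {a b : G}
    (ha : a + a = 0) (hb : b + b = 0) (ha0 : a ≠ 0) (hb0 : b ≠ 0) (hab : a ≠ b) :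
    Nat.card (AddSubgroup.closure ({a, b} : Set G)) = 4 := by
  have hnega : -a = a := neg_eq_of_add_eq_zero_left ha
  have hnegb : -b = b := neg_eq_of_add_eq_zero_left hb
  have hab0 : a + b ≠ 0 := by
    intro h
    exact hab (by rw [eq_neg_of_add_eq_zero_left h, hnegb])
  have haba : a + b ≠ a := by
    intro h; exact hb0 (by rwa [add_eq_left] at h)
  have habb : a + b ≠ b := by
    intro h; exact ha0 (by rwa [add_eq_right] at h)
  have h1 : a + (a + b) = b := by rw [← add_assoc, ha, zero_add]
  have h2 : b + (a + b) = a := by rw [add_comm a b, ← add_assoc, hb, zero_add]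
  have h3 : (a + b) + (a + b) = 0 := by rw [add_add_add_comm, ha, hb, add_zero]
  have h4 : b + a = a + b := add_comm b a
  have h5 : (a + b) + a = b := by rw [add_comm, h1]
  have h6 : (a + b) + b = a := by rw [add_comm, h2]
  set S : AddSubgroup G :=
    { carrier := {0, a, b, a + b}
      zero_mem' := Or.inl rfl
      add_mem' := by
        rintro x y (rfl | rfl | rfl | rfl) (rfl | rfl | rfl | rfl) <;>
          simp [Set.mem_insert_iff, ha, hb, h1, h2, h3, h4, h5, h6]
      neg_mem' := by
        rintro x (rfl | rfl | rfl | rfl) <;>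
          simp [Set.mem_insert_iff, hnega, hnegb, neg_add_rev, h4] } with hSdef
  have hcl : AddSubgroup.closure ({a, b} : Set G) = S := by
    apply le_antisymm
    · exact (AddSubgroup.closure_le S).2 (by
        rintro x (rfl | rfl)
        · exact Or.inr (Or.inl rfl)
        · exact Or.inr (Or.inr (Or.inl rfl)))
    · rintro x (rfl | rfl | rfl | rfl)
      · exact AddSubgroup.zero_mem _
      · exact AddSubgroup.subset_closure (Or.inl rfl)
      · exact AddSubgroup.subset_closure (Or.inr rfl)
      · exact AddSubgroup.add_mem _ (AddSubgroup.subset_closure (Or.inl rfl))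
          (AddSubgroup.subset_closure (Or.inr rfl))
  rw [hcl]
  show Nat.card ({0, a, b, a + b} : Set G) = 4
  rw [show Nat.card ({0, a, b, a + b} : Set G) = ({0, a, b, a + b} : Set G).ncard from rfl]
  rw [Set.ncard_insert_of_notMem (by simp [ha0.symm, hb0.symm, hab0.symm]),
    Set.ncard_insert_of_notMem (by simp [hab, haba.symm]),
    Set.ncard_insert_of_notMem (by simp [habb.symm]),
    Set.ncard_singleton]

open WeierstrassCurve.Affine in
/-- The injection of the points of `E₂mod p` into `∞` plus the affine solutions of its
Weierstrass equation. -/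
noncomputable def E₂pointMap (p : ℕ) :
    (E₂mod p).Point → Option {q : ZMod p × ZMod p // (E₂mod p).Equation q.1 q.2}
  | .zero => none
  | @Point.some _ _ _ x y h => some ⟨(x, y), (((E₂mod p).nonsingular_iff x y).mp h).1⟩

lemma E₂pointMap_inj (p : ℕ) : Function.Injective (E₂pointMap p) := by
  intro P Q h
  cases P with
  | zero =>
    cases Q with
    | zero => rfl
    | some hQ => simp [E₂pointMap] at h
  | some hP =>
    cases Q with
    | zero => simp [E₂pointMap] at h
    | some hQ =>
      simp only [E₂pointMap, Option.some.injEq, Subtype.mk.injEq, Prod.mk.injEq] at h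
      obtain ⟨hx, hy⟩ := h
      subst hx; subst hy; rfl

open Polynomial in
/-- There are at most `2p` affine solutions of the Weierstrass equation of `E₂mod p`. -/
lemma E₂_affine_card_le (p : ℕ) (hp : p.Prime) :
    Nat.card {q : ZMod p × ZMod p // (E₂mod p).Equation q.1 q.2} ≤ 2 * p := by
  haveI : Fact p.Prime := ⟨hp⟩
  haveI : NeZero p := ⟨hp.pos.ne'⟩
  classical
  rw [Nat.card_eq_fintype_card, Fintype.card_subtype]
  refine le_trans (Finset.card_le_mul_card_image (f := Prod.fst) _ 2 ?_) ?_
  · intro x _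
    set P : (ZMod p)[X] := C 1 * X ^ 2 + C (x + 1) * X + C (-(x ^ 3 + x ^ 2 - 5 * x + 2)) with hP
    have hPdeg : P.natDegree = 2 := Polynomial.natDegree_quadratic one_ne_zero
    have hP0 : P ≠ 0 := fun h => by simp [h] at hPdeg
    refine le_trans (Finset.card_le_card_of_injOn (t := P.roots.toFinset) Prod.snd ?_ ?_) ?_
    · intro q hq
      simp only [Finset.mem_coe, Finset.mem_filter, Finset.mem_univ, true_and] at hq
      obtain ⟨heq, hfst⟩ := hq
      rw [Finset.mem_coe, Multiset.mem_toFinset, Polynomial.mem_roots']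
      refine ⟨hP0, ?_⟩
      rw [WeierstrassCurve.Affine.equation_iff] at heq
      simp only [E₂mod] at heq
      rw [hfst] at heq
      show P.eval q.2 = 0
      simp only [hP, eval_add, eval_mul, eval_pow, eval_C, eval_X]
      linear_combination heq
    · intro q hq r hr hsnd
      simp only [Finset.mem_coe, Finset.mem_filter] at hq hr
      exact Prod.ext (hq.2.trans hr.2.symm) hsnd
    · exact le_trans (Multiset.toFinset_card_le _) (le_trans (P.card_roots') hPdeg.le)
  · calc 2 * (Finset.image Prod.fst _).card ≤ 2 * Fintype.card (ZMod p) :=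
          Nat.mul_le_mul_left 2 (Finset.card_le_univ _)
      _ = 2 * p := by rw [ZMod.card]

open WeierstrassCurve.Affine

/-- For any prime `p ≥ 3` with `p ∉ {3, 5}`, `p` does not divide the number of points
of the reduction of `E₂` modulo `p`; equivalently `a_p(E₂) = p + 1 − #E₂(𝔽_p)` is not
congruent to `1` modulo `p`. -/
theorem p_not_dvd_card_E₂_mod_p (p : ℕ) (hp : p.Prime) (hp3' : 3 ≤ p) (hp3 : p ≠ 3)
    (hp5 : p ≠ 5) :
    ¬ p ∣ Nat.card (E₂mod p).Point ∧
      ¬ ((p : ℤ) + 1 - Nat.card (E₂mod p).Point ≡ 1 [ZMOD p]) := by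
  haveI : Fact p.Prime := ⟨hp⟩
  haveI : Fact (1 < p) := ⟨hp.one_lt⟩
  haveI : NeZero p := ⟨hp.pos.ne'⟩
  haveI hfin : Finite (E₂mod p).Point := Finite.of_injective _ (E₂pointMap_inj p)
  -- nonzero constants
  have h15 : (15 : ZMod p) ≠ 0 := by
    intro h
    have hd : p ∣ 15 := (ZMod.natCast_eq_zero_iff 15 p).mp (by exact_mod_cast h)
    have hle := Nat.le_of_dvd (by norm_num) hd
    interval_cases p <;> first | omega | (revert hd; decide) | (revert hp; decide)
  have h4 : (4 : ZMod p) ≠ 0 := by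
    intro h
    have hd : p ∣ 4 := (ZMod.natCast_eq_zero_iff 4 p).mp (by exact_mod_cast h)
    have hle := Nat.le_of_dvd (by norm_num) hd
    interval_cases p <;> first | (revert hd; decide) | (revert hp; decide)
  -- the two rational two-torsion points
  have hT1 : (E₂mod p).Nonsingular 1 (-1) := by
    rw [WeierstrassCurve.Affine.nonsingular_iff]
    constructor
    · rw [WeierstrassCurve.Affine.equation_iff]
      simp only [E₂mod]
      ring
    · left
      simp only [E₂mod]
      intro h
      have : (1 : ZMod p) = 0 := by linear_combination -h
      simp at this
  have hT3 : (E₂mod p).Nonsingular (-3) 1 := by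
    rw [WeierstrassCurve.Affine.nonsingular_iff]
    constructor
    · rw [WeierstrassCurve.Affine.equation_iff]
      simp only [E₂mod]
      ring
    · left
      simp only [E₂mod]
      intro h
      exact h15 (by linear_combination -h)
  have hadd1 : Point.some _ _ hT1 + Point.some _ _ hT1 = 0 := by
    apply Point.add_self_of_Y_eq
    simp only [WeierstrassCurve.Affine.negY, E₂mod]
    ring
  have hadd3 : Point.some _ _ hT3 + Point.some _ _ hT3 = 0 := by
    apply Point.add_self_of_Y_eq
    simp only [WeierstrassCurve.Affine.negY, E₂mod]
    ring
  have hne : Point.some _ _ hT1 ≠ Point.some _ _ hT3 := by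
    intro h
    simp only [Point.some.injEq] at h
    exact h4 (by linear_combination h.1)
  -- `4` divides the number of points
  have hdvd4 : 4 ∣ Nat.card (E₂mod p).Point := by
    have hK := closure_pair_card_four hadd1 hadd3 (Point.some_ne_zero hT1)
      (Point.some_ne_zero hT3) hne
    exact hK ▸ AddSubgroup.card_addSubgroup_dvd_card _
  -- the number of points is at most `2p + 1`
  have hle : Nat.card (E₂mod p).Point ≤ 2 * p + 1 := by
    have h1 := Nat.card_le_card_of_injective _ (E₂pointMap_inj p)
    rw [nat_card_option] at h1
    have h2 := E₂_affine_card_le p hp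
    omega
  have hpos : 0 < Nat.card (E₂mod p).Point := Nat.card_pos
  have hmain : ¬ p ∣ Nat.card (E₂mod p).Point := by
    intro hdvd
    have hnd4 : ¬ p ∣ 4 := by
      intro hd
      have hle4 := Nat.le_of_dvd (by norm_num) hd
      interval_cases p <;> first | (revert hd; decide) | (revert hp; decide)
    have hco : Nat.Coprime p 4 := (Nat.Prime.coprime_iff_not_dvd hp).2 hnd4
    have hdd : p * 4 ∣ Nat.card (E₂mod p).Point := hco.mul_dvd_of_dvd_of_dvd hdvd hdvd4
    have := Nat.le_of_dvd hpos hdd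
    omega
  refine ⟨hmain, ?_⟩
  intro hmod
  apply hmain
  have hd : (p : ℤ) ∣ (1 : ℤ) - ((p : ℤ) + 1 - Nat.card (E₂mod p).Point) := Int.ModEq.dvd hmod
  have hd2 : (p : ℤ) ∣ (Nat.card (E₂mod p).Point : ℤ) := by
    have : (1 : ℤ) - ((p : ℤ) + 1 - Nat.card (E₂mod p).Point) =
        (Nat.card (E₂mod p).Point : ℤ) - p := by ring
    rw [this] at hd
    have := dvd_add hd (dvd_refl (p : ℤ))
    rwa [sub_add_cancel] at this
  exact_mod_cast hd2
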